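/- Let z_1,...,z_n be distinct points of CP^1 with nonzero lifts (u_i,v_i) and L_i(u,v) = u_i v - v_i u. Fix 1 <= k <= n-1 and d = n-k. For each k-subset I of {1,...,n} with complement J, define p_I = \odot_{j in J} Lambda_{L_j^k} in Sym^d(P_{1,k}^*). Then the binom(n,k) elements p_I are linearly independent over C. -/

import Mathlib

open Polynomial Finset

/-- The bilinear pairing on binary forms of degree `k`, where a form
`q(u,v) = ∑ c_i u^(k-i) v^i` is encoded as the polynomial `∑ c_i X^i` (i.e. `u = 1`,
`X = v`):  `(q, q~) = ∑_{i=0}^k (-1)^i c_i d_{k-i} / binom(k,i)`. -/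
noncomputable def bform (k : ℕ) (q r : Polynomial ℂ) : ℂ :=
  ∑ i ∈ Finset.range (k + 1), (-1) ^ i * q.coeff i * r.coeff (k - i) / (k.choose i : ℂ)

lemma coeff_lin_pow (a b : ℂ) (k i : ℕ) :
    ((C a * X + C b) ^ k).coeff i = (k.choose i : ℂ) * a ^ i * b ^ (k - i) := by
  have h : (C a * X + C b) ^ k = ∑ j ∈ Finset.range (k+1),
      C (a ^ j * b ^ (k - j) * (k.choose j : ℂ)) * X ^ j := by
    rw [add_pow]
    refine Finset.sum_congr rfl fun j hj => ?_
    simp only [map_mul, map_pow, map_natCast, mul_pow]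
    ring
  rw [h, finset_sum_coeff]
  simp only [coeff_C_mul, coeff_X_pow, mul_ite, mul_one, mul_zero]
  rw [Finset.sum_ite_eq (Finset.range (k+1)) i]
  by_cases hik : i ∈ Finset.range (k+1)
  · simp [hik]; ring
  · simp [hik, Nat.choose_eq_zero_of_lt (by simpa using hik : k < i)]

lemma bform_lin_pow (k : ℕ) (a b : ℂ) (x : Polynomial ℂ) :
    bform k ((C a * X - C b) ^ k) x
      = (-1) ^ k * ∑ m ∈ Finset.range (k+1), x.coeff m * a ^ (k - m) * b ^ m := by
  have h : C a * X - C b = C a * X + C (-b) := by rw [map_neg]; ring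
  rw [h, bform, Finset.mul_sum, ← Finset.sum_range_reflect]
  refine Finset.sum_congr rfl fun i hi => ?_
  have hik : i ≤ k := Nat.lt_succ_iff.mp (Finset.mem_range.mp hi)
  have h2 : k + 1 - 1 - i = k - i := by omega
  have h3 : k - (k - i) = i := by omega
  rw [coeff_lin_pow, h2, h3]
  have hc : (k.choose i : ℂ) ≠ 0 := by
    exact_mod_cast Nat.cast_ne_zero.mpr (Nat.choose_pos hik).ne'
  field_simp
  have hki : (-b) ^ i = (-1) ^ i * b ^ i := by rw [neg_pow]
  rw [hki]
  have : (-1 : ℂ) ^ k = (-1) ^ (k - i) * (-1) ^ i := by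
    rw [← pow_add]; congr 1; omega
  rw [this, Nat.choose_symm hik]
  linear_combination (a ^ (k - i) * b ^ i * x.coeff i * (-1) ^ (k - i) * (-1) ^ i) * mul_inv_cancel₀ hc

lemma sum_coeff_prod {α : Type*} [DecidableEq α] (S : Finset α) (f g : α → ℂ) (a b : ℂ) :
    ∑ m ∈ Finset.range (S.card + 1),
        (∏ i ∈ S, (C (f i) * X - C (g i))).coeff m * a ^ (S.card - m) * b ^ m
      = ∏ i ∈ S, (f i * b - g i * a) := by
  induction S using Finset.cons_induction with
  | empty => simp
  | cons j T hj ih =>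
    rw [Finset.prod_cons, Finset.prod_cons, Finset.card_cons]
    set p : Polynomial ℂ := ∏ i ∈ T, (C (f i) * X - C (g i)) with hp
    set t : ℕ := T.card with ht
    have hdeg : p.natDegree ≤ t := by
      refine le_trans (Polynomial.natDegree_prod_le _ _) ?_
      rw [ht, Finset.card_eq_sum_ones]
      refine Finset.sum_le_sum fun i _ => ?_
      refine le_trans (Polynomial.natDegree_sub_le _ _) ?_
      simp [Polynomial.natDegree_C_mul_le, Polynomial.natDegree_X]
      exact le_trans (Polynomial.natDegree_C_mul_le _ _) (le_of_eq Polynomial.natDegree_X)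
    have hco : ∀ m, ((C (f j) * X - C (g j)) * p).coeff m
        = f j * (X * p).coeff m - g j * p.coeff m := by
      intro m
      rw [sub_mul, mul_assoc, Polynomial.coeff_sub, Polynomial.coeff_C_mul,
        Polynomial.coeff_C_mul]
    simp only [hco]
    have hsplit : ∀ m, (f j * (X * p).coeff m - g j * p.coeff m) * a ^ (t + 1 - m) * b ^ m
        = f j * ((X * p).coeff m * a ^ (t + 1 - m) * b ^ m)
          - g j * (p.coeff m * a ^ (t + 1 - m) * b ^ m) := by intro m; ring
    simp only [hsplit]
    rw [Finset.sum_sub_distrib, ← Finset.mul_sum, ← Finset.mul_sum]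
    have h1 : ∑ m ∈ Finset.range (t + 1 + 1), (X * p).coeff m * a ^ (t + 1 - m) * b ^ m
        = b * ∑ m ∈ Finset.range (t + 1), p.coeff m * a ^ (t - m) * b ^ m := by
      rw [Finset.sum_range_succ']
      simp only [Polynomial.coeff_X_mul]
      rw [Polynomial.mul_coeff_zero, Polynomial.coeff_X_zero]
      simp only [zero_mul, mul_zero, add_zero]
      rw [Finset.mul_sum]
      refine Finset.sum_congr rfl fun m hm => ?_
      have : t + 1 - (m + 1) = t - m := by omega
      rw [this]; ring
    have h2 : ∑ m ∈ Finset.range (t + 1 + 1), p.coeff m * a ^ (t + 1 - m) * b ^ m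
        = a * ∑ m ∈ Finset.range (t + 1), p.coeff m * a ^ (t - m) * b ^ m := by
      rw [Finset.sum_range_succ]
      rw [Polynomial.coeff_eq_zero_of_natDegree_lt (lt_of_le_of_lt hdeg (Nat.lt_succ_self t))]
      simp only [zero_mul, add_zero, Finset.mul_sum]
      refine Finset.sum_congr rfl fun m hm => ?_
      have hm' : m ≤ t := Nat.lt_succ_iff.mp (Finset.mem_range.mp hm)
      have : t + 1 - m = (t - m) + 1 := by omega
      rw [this, pow_succ]; ring
    rw [h1, h2, ih]; ring

lemma cross_ne {n : ℕ} (u v : Fin n → ℂ) (hnz : ∀ i, ((u i, v i) : ℂ × ℂ) ≠ 0)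
    (hdist : ∀ i j, i ≠ j → ¬ ∃ c : ℂ, ((u j, v j) : ℂ × ℂ) = c • (u i, v i))
    {i j : Fin n} (h : i ≠ j) : u i * v j - v i * u j ≠ 0 := by
  intro hc
  have hc' : u i * v j = v i * u j := sub_eq_zero.mp hc
  apply hdist i j h
  have hor : u i ≠ 0 ∨ v i ≠ 0 := by
    by_contra hcon
    push_neg at hcon
    exact hnz i (by simp [hcon.1, hcon.2, Prod.ext_iff])
  rcases hor with hu | hv
  · refine ⟨u j / u i, ?_⟩
    have h1 : u j = u j / u i * u i := by field_simp
    have h2 : v j = u j / u i * v i := by field_simp; linear_combination hc'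
    rw [Prod.smul_mk, smul_eq_mul, smul_eq_mul, Prod.mk.injEq]
    exact ⟨h1, h2⟩
  · refine ⟨v j / v i, ?_⟩
    have h1 : u j = v j / v i * u i := by field_simp; linear_combination -hc'
    have h2 : v j = v j / v i * v i := by field_simp
    rw [Prod.smul_mk, smul_eq_mul, smul_eq_mul, Prod.mk.injEq]
    exact ⟨h1, h2⟩

/-- star-based construction, `ℂP¹` case: for distinct points of `ℂP¹` with
nonzero lifts `(uᵢ, vᵢ)`, `Lᵢ = uᵢ v - vᵢ u` (encoded as `uᵢ X - vᵢ`), `1 ≤ k ≤ n-1`,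
`d = n - k`, and for each `k`-subset `I` with complement `J`,
`p_I = ⊙_{j ∈ J} Λ_{L_j^k} ∈ Sym^d(P_{1,k}^*)` — realized here, via the canonical
embedding of `Sym^d` of the dual into functions, as the polynomial function
`x ↦ ∏_{j ∈ J} (L_j^k, x)` — the `binom(n,k)` elements `p_I` are linearly independent. -/
theorem star_maps_linearIndependent (n k : ℕ) (hk : 1 ≤ k) (hkn : k ≤ n - 1)
    (u v : Fin n → ℂ) (hnz : ∀ i, ((u i, v i) : ℂ × ℂ) ≠ 0)
    (hdist : ∀ i j, i ≠ j → ¬ ∃ c : ℂ, ((u j, v j) : ℂ × ℂ) = c • (u i, v i)) :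
    LinearIndependent ℂ
      (fun I : Finset.powersetCard k (Finset.univ : Finset (Fin n)) =>
        (fun x : Polynomial ℂ =>
          ∏ j ∈ ((I : Finset (Fin n)))ᶜ,
            bform k ((Polynomial.C (u j) * Polynomial.X - Polynomial.C (v j)) ^ k) x)) := by
  classical
  rw [Fintype.linearIndependent_iff]
  intro g hg I₀
  have hI₀card : (I₀ : Finset (Fin n)).card = k :=
    (Finset.mem_powersetCard.mp I₀.2).2
  set x₀ : Polynomial ℂ := ∏ i ∈ (I₀ : Finset (Fin n)), (C (u i) * X - C (v i)) with hx₀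
  have key : ∀ j : Fin n, bform k ((C (u j) * X - C (v j)) ^ k) x₀
      = (-1) ^ k * ∏ i ∈ (I₀ : Finset (Fin n)), (u i * v j - v i * u j) := by
    intro j
    rw [bform_lin_pow]
    congr 1
    have h := sum_coeff_prod (I₀ : Finset (Fin n)) u v (u j) (v j)
    rw [hI₀card] at h
    exact h
  have heval := congrFun hg x₀
  rw [Finset.sum_apply, Pi.zero_apply] at heval
  simp only [Pi.smul_apply, smul_eq_mul] at heval
  have hzero : ∀ I : Finset.powersetCard k (Finset.univ : Finset (Fin n)),
      I ≠ I₀ → (∏ j ∈ ((I : Finset (Fin n)))ᶜ,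
        bform k ((C (u j) * X - C (v j)) ^ k) x₀) = 0 := by
    intro I hne
    have hIcard : (I : Finset (Fin n)).card = k := (Finset.mem_powersetCard.mp I.2).2
    have hns : ¬ (I₀ : Finset (Fin n)) ⊆ (I : Finset (Fin n)) := by
      intro hsub
      exact hne (Subtype.ext
        (Finset.eq_of_subset_of_card_le hsub (by rw [hIcard, hI₀card])).symm)
    obtain ⟨j, hjI₀, hjI⟩ := Finset.not_subset.mp hns
    refine Finset.prod_eq_zero (Finset.mem_compl.mpr hjI) ?_
    rw [key j]
    have : (∏ i ∈ (I₀ : Finset (Fin n)), (u i * v j - v i * u j)) = 0 :=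
      Finset.prod_eq_zero hjI₀ (by ring)
    rw [this, mul_zero]
  have hsingle : g I₀ * (∏ j ∈ ((I₀ : Finset (Fin n)))ᶜ,
      bform k ((C (u j) * X - C (v j)) ^ k) x₀) = 0 := by
    rw [← heval]
    symm
    apply Finset.sum_eq_single_of_mem I₀ (Finset.mem_univ I₀)
    intro b _ hb
    rw [hzero b hb, mul_zero]
  have hne0 : (∏ j ∈ ((I₀ : Finset (Fin n)))ᶜ,
      bform k ((C (u j) * X - C (v j)) ^ k) x₀) ≠ 0 := by
    refine Finset.prod_ne_zero_iff.mpr fun j hj => ?_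
    rw [key j]
    refine mul_ne_zero (pow_ne_zero _ (by norm_num)) ?_
    refine Finset.prod_ne_zero_iff.mpr fun i hi => ?_
    have hij : i ≠ j := fun h => (Finset.mem_compl.mp hj) (h ▸ hi)
    exact cross_ne u v hnz hdist hij
  exact (mul_eq_zero.mp hsingle).resolve_right hne0
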